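/- Mutual replacement individual fairness is separated from strict individual fairness: let D = {i1, i2, j, k} with the proto-metric in which i1 and i2 form one cluster and j and k are singleton clusters (d(i1,i2) = 0, all other distances between distinct doctors equal 1). Let r¹ be the uniform distribution over the two orders i1≻j≻i2≻k and i2≻j≻i1≻k, and let r² be the uniform distribution over the two orders i1≻k≻i2≻j and i2≻j≻i1≻k. Then: (a) r¹ is mutual replacement individually fair with respect to this proto-metric; (b) r¹ is not strictly individually fair with respect to the partition (for the clusters {i1,i2} and {j}, neither cluster is ranked entirely above the other with probability 1); and (c) r² is not mutual replacement individually fair: D_TV(r², (r²)^{i1;i2}) = 1 > 0 = d(i1,i2). -/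
import Mathlib


open Finset

namespace Stmt11

/-! Doctors: `i1 = 0`, `i2 = 1`, `j = 2`, `k = 3`.  A strict linear order on the
doctors is represented by its rank bijection `σ : Fin 4 ≃ Fin 4`, where `σ x` is the
(0-based) rank of doctor `x`: `σ x < σ y` means `x` is ranked above `y`.
Clusters: `{i1, i2}` (cluster `0`), `{j}` (cluster `1`), `{k}` (cluster `2`). -/

/-- The cluster map. -/
def c : Fin 4 → Fin 3 := ![0, 0, 1, 2]

/-- The proto-metric induced by the clusters. -/
noncomputable def dproto : Fin 4 → Fin 4 → ℝ := fun x y => if c x = c y then 0 else 1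

/-- Total variation distance between two distributions over strict linear orders. -/
noncomputable def TVord (r r' : (Fin 4 ≃ Fin 4) → ℝ) : ℝ :=
  (1 / 2) * ∑ σ : Fin 4 ≃ Fin 4, |r σ - r' σ|

/-- The distribution `r^{x;y}` obtained from `r` by swapping the doctors `x` and `y`
in each sampled order. -/
def swapDist (r : (Fin 4 ≃ Fin 4) → ℝ) (x y : Fin 4) : (Fin 4 ≃ Fin 4) → ℝ :=
  fun σ => r ((Equiv.swap x y).trans σ)

/-- `r` is mutual replacement individually fair with respect to the pseudometric `d`. -/
def MutualReplacementIF (d : Fin 4 → Fin 4 → ℝ) (r : (Fin 4 ≃ Fin 4) → ℝ) : Prop :=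
  ∀ x y : Fin 4, TVord r (swapDist r x y) ≤ d x y

/-- A distribution `q` over strict linear orders is *strictly individually fair* with
respect to the cluster map `c` if (i) any two doctors in the same cluster have the same
rank distribution, and (ii) for any two distinct clusters, with probability 1 one of
them is entirely ranked above the other. -/
def StrictIF (q : (Fin 4 ≃ Fin 4) → ℝ) : Prop :=
  (∀ i j : Fin 4, c i = c j → ∀ k : Fin 4,
      (∑ σ : Fin 4 ≃ Fin 4, if σ i = k then q σ else 0) =
        (∑ σ : Fin 4 ≃ Fin 4, if σ j = k then q σ else 0)) ∧
  (∀ k1 k2 : Fin 3, k1 ≠ k2 →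
      (∀ σ : Fin 4 ≃ Fin 4, q σ ≠ 0 → ∀ i j : Fin 4, c i = k1 → c j = k2 → σ i < σ j) ∨
      (∀ σ : Fin 4 ≃ Fin 4, q σ ≠ 0 → ∀ i j : Fin 4, c i = k1 → c j = k2 → σ j < σ i))

/-- The order `i1 ≻ j ≻ i2 ≻ k` (ranks of `(i1, i2, j, k)` are `(0, 2, 1, 3)`). -/
def σa : Fin 4 ≃ Fin 4 := ⟨![0, 2, 1, 3], ![0, 2, 1, 3], by decide, by decide⟩

/-- The order `i2 ≻ j ≻ i1 ≻ k` (ranks of `(i1, i2, j, k)` are `(2, 0, 1, 3)`). -/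
def σb : Fin 4 ≃ Fin 4 := ⟨![2, 0, 1, 3], ![1, 2, 0, 3], by decide, by decide⟩

/-- The order `i1 ≻ k ≻ i2 ≻ j` (ranks of `(i1, i2, j, k)` are `(0, 2, 3, 1)`). -/
def τa : Fin 4 ≃ Fin 4 := ⟨![0, 2, 3, 1], ![0, 3, 1, 2], by decide, by decide⟩

/-- `r¹`: the uniform distribution over the orders `i1 ≻ j ≻ i2 ≻ k` and
`i2 ≻ j ≻ i1 ≻ k`. -/
noncomputable def r1 : (Fin 4 ≃ Fin 4) → ℝ := fun σ =>
  (1 / 2) * (if σ = σa then 1 else 0) + (1 / 2) * (if σ = σb then 1 else 0)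

/-- `r²`: the uniform distribution over the orders `i1 ≻ k ≻ i2 ≻ j` and
`i2 ≻ j ≻ i1 ≻ k`. -/
noncomputable def r2 : (Fin 4 ≃ Fin 4) → ℝ := fun σ =>
  (1 / 2) * (if σ = τa then 1 else 0) + (1 / 2) * (if σ = σb then 1 else 0)

-- auxiliary lemmas

lemma trans_eq_iff (σ τ e : Equiv.Perm (Fin 4)) : e.trans σ = τ ↔ σ = e.symm.trans τ := by
  constructor <;> rintro rfl <;> ext z <;> simp

lemma sum_ind (τ : Equiv.Perm (Fin 4)) :
    ∑ σ : Fin 4 ≃ Fin 4, (if σ = τ then (1:ℝ) else 0) = 1 := by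
  rw [Finset.sum_ite_eq' Finset.univ τ (fun _ => (1:ℝ))]
  simp

lemma sum_r1 : ∑ σ : Fin 4 ≃ Fin 4, r1 σ = 1 := by
  simp only [r1, Finset.sum_add_distrib, ← Finset.mul_sum, sum_ind]
  norm_num

lemma sum_swap (r : (Fin 4 ≃ Fin 4) → ℝ) (x y : Fin 4) :
    ∑ σ : Fin 4 ≃ Fin 4, swapDist r x y σ = ∑ σ : Fin 4 ≃ Fin 4, r σ :=
  Equiv.sum_comp (Equiv.mulRight (Equiv.swap x y)) r

lemma r1_nonneg (σ : Fin 4 ≃ Fin 4) : 0 ≤ r1 σ := by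
  unfold r1; positivity

lemma tv_le_one (x y : Fin 4) : TVord r1 (swapDist r1 x y) ≤ 1 := by
  unfold TVord
  have h : ∀ σ : Fin 4 ≃ Fin 4, |r1 σ - swapDist r1 x y σ| ≤ r1 σ + swapDist r1 x y σ := by
    intro σ
    have := abs_sub (r1 σ) (swapDist r1 x y σ)
    calc |r1 σ - swapDist r1 x y σ| ≤ |r1 σ| + |swapDist r1 x y σ| := abs_sub _ _
      _ = r1 σ + swapDist r1 x y σ := by
          rw [abs_of_nonneg (r1_nonneg σ),
            abs_of_nonneg (show 0 ≤ swapDist r1 x y σ from r1_nonneg _)]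
  calc (1/2) * ∑ σ : Fin 4 ≃ Fin 4, |r1 σ - swapDist r1 x y σ|
      ≤ (1/2) * ∑ σ : Fin 4 ≃ Fin 4, (r1 σ + swapDist r1 x y σ) := by
        apply mul_le_mul_of_nonneg_left (Finset.sum_le_sum fun σ _ => h σ); norm_num
    _ = 1 := by
        rw [Finset.sum_add_distrib, sum_swap, sum_r1]; norm_num

lemma swap01_r1 : swapDist r1 0 1 = r1 := by
  funext σ
  show r1 ((Equiv.swap 0 1).trans σ) = r1 σ
  unfold r1
  simp only [trans_eq_iff]
  have h1 : (Equiv.swap (0:Fin 4) 1).symm.trans σa = σb := by decide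
  have h2 : (Equiv.swap (0:Fin 4) 1).symm.trans σb = σa := by decide
  rw [h1, h2]; ring

lemma swap_refl (x : Fin 4) (r : (Fin 4 ≃ Fin 4) → ℝ) : swapDist r x x = r := by
  funext σ; show r ((Equiv.swap x x).trans σ) = r σ
  rw [Equiv.swap_self]; simp

lemma tv_self (r : (Fin 4 ≃ Fin 4) → ℝ) : TVord r r = 0 := by
  unfold TVord; simp

def τb : Fin 4 ≃ Fin 4 := (Equiv.swap 0 1).trans τa

lemma tv_r2 : TVord r2 (swapDist r2 0 1) = 1 := by
  have hpt : ∀ σ : Fin 4 ≃ Fin 4, |r2 σ - swapDist r2 0 1 σ| =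
      (1/2) * ((if σ = τa then (1:ℝ) else 0) + (if σ = σb then 1 else 0)
        + (if σ = τb then 1 else 0) + (if σ = σa then 1 else 0)) := by
    intro σ
    show |r2 σ - r2 ((Equiv.swap 0 1).trans σ)| = _
    unfold r2
    simp only [trans_eq_iff]
    have h1 : (Equiv.swap (0:Fin 4) 1).symm.trans τa = τb := by decide
    have h2 : (Equiv.swap (0:Fin 4) 1).symm.trans σb = σa := by decide
    rw [h1, h2]
    by_cases e1 : σ = τa <;> by_cases e2 : σ = σb <;> by_cases e3 : σ = τb <;>
      by_cases e4 : σ = σa <;>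
      simp_all (config := { decide := true })
  unfold TVord
  rw [Finset.sum_congr rfl (fun σ _ => hpt σ)]
  rw [← Finset.mul_sum]
  simp only [Finset.sum_add_distrib, sum_ind]
  norm_num

/-- (a) `r¹` is mutual replacement individually fair with respect to
the proto-metric; (b) `r¹` is not strictly individually fair: for the clusters
`{i1,i2}` and `{j}`, neither cluster is ranked entirely above the other with
probability 1; (c) `r²` is not mutual replacement individually fair:
`D_TV(r², (r²)^{i1;i2}) = 1 > 0 = d(i1,i2)`. -/
theorem mutual_replacement_IF_separated_from_strict_IF :
    MutualReplacementIF dproto r1 ∧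
    ¬ StrictIF r1 ∧
    ¬ (∀ σ : Fin 4 ≃ Fin 4, r1 σ ≠ 0 →
        ∀ i j : Fin 4, c i = 0 → c j = 1 → σ i < σ j) ∧
    ¬ (∀ σ : Fin 4 ≃ Fin 4, r1 σ ≠ 0 →
        ∀ i j : Fin 4, c i = 0 → c j = 1 → σ j < σ i) ∧
    ¬ MutualReplacementIF dproto r2 ∧
    TVord r2 (swapDist r2 0 1) = 1 ∧
    dproto 0 1 = 0 := by
  have hr1σa : r1 σa ≠ 0 := by
    unfold r1
    rw [if_pos rfl, if_neg (by decide : σa ≠ σb)]; norm_num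
  have hw1 : ¬ (∀ σ : Fin 4 ≃ Fin 4, r1 σ ≠ 0 →
      ∀ i j : Fin 4, c i = 0 → c j = 1 → σ i < σ j) := by
    intro h
    have := h σa hr1σa 1 2 (by decide) (by decide)
    revert this; decide
  have hw2 : ¬ (∀ σ : Fin 4 ≃ Fin 4, r1 σ ≠ 0 →
      ∀ i j : Fin 4, c i = 0 → c j = 1 → σ j < σ i) := by
    intro h
    have := h σa hr1σa 0 2 (by decide) (by decide)
    revert this; decide
  refine ⟨?_, ?_, hw1, hw2, ?_, tv_r2, by simp [dproto, c]⟩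
  · -- MutualReplacementIF dproto r1
    intro x y
    by_cases hc : c x = c y
    · have hd : dproto x y = 0 := by simp [dproto, hc]
      rw [hd]
      by_cases hxy : x = y
      · subst hxy; rw [swap_refl, tv_self]
      · have hxy' : (x = 0 ∧ y = 1) ∨ (x = 1 ∧ y = 0) := by
          clear hd; revert hc hxy; revert x y; decide
        have key : swapDist r1 x y = r1 := by
          rcases hxy' with ⟨rfl, rfl⟩ | ⟨rfl, rfl⟩
          · exact swap01_r1
          · rw [show swapDist r1 1 0 = swapDist r1 0 1 from by
              funext τ; show r1 ((Equiv.swap 1 0).trans τ) = r1 ((Equiv.swap 0 1).trans τ)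
              rw [Equiv.swap_comm]]
            exact swap01_r1
        rw [key, tv_self]
    · have hd : dproto x y = 1 := by simp [dproto, hc]
      rw [hd]; exact tv_le_one x y
  · -- ¬ StrictIF r1
    rintro ⟨-, h2⟩
    rcases h2 0 1 (by decide) with h | h
    · exact hw1 h
    · exact hw2 h
  · -- ¬ MutualReplacementIF dproto r2
    intro h
    have := h 0 1
    rw [tv_r2] at this
    simp [dproto, c] at this
    linarith


end Stmt11
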